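/- Let R be a finite collection of subsets of {1,...,m} closed under unions and intersections, and let φ: R → ℝ≥0 be increasing with respect to inclusion and satisfy the inclusion-exclusion inequality (for all A_1,...,A_k∈R, φ(∪A_i) ≥ ∑_{∅≠K⊆{1,...,k}} (-1)^{|K|+1} φ(∩_{i∈K}A_i)). Then there exist nonnegative weights (w_{A'})_{A'∈R} such that φ(A) = ∑_{A'∈R, A'⊆A} w_{A'} for every A∈R. -/
import Mathlib

open Finset

noncomputable def myw {m : ℕ} (R : Finset (Finset (Fin m))) (φ : Finset (Fin m) → ℝ) :
    Finset (Fin m) → ℝ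
  | A => φ A - ∑ A' ∈ (R.filter (fun A' => A' ⊂ A)).attach, myw R φ A'.1
termination_by A => A.card
decreasing_by
  exact Finset.card_lt_card (Finset.mem_filter.mp A'.2).2

lemma myw_spec {m : ℕ} (R : Finset (Finset (Fin m))) (φ : Finset (Fin m) → ℝ)
    (A : Finset (Fin m)) :
    myw R φ A = φ A - ∑ A' ∈ R.filter (fun A' => A' ⊂ A), myw R φ A' := by
  rw [myw, Finset.sum_attach]

lemma myw_rep {m : ℕ} (R : Finset (Finset (Fin m))) (φ : Finset (Fin m) → ℝ)
    (A : Finset (Fin m)) (hA : A ∈ R) :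
    φ A = ∑ A' ∈ R.filter (fun A' => A' ⊆ A), myw R φ A' := by
  have h : R.filter (fun A' => A' ⊆ A) = insert A (R.filter (fun A' => A' ⊂ A)) := by
    ext x
    simp only [Finset.mem_filter, Finset.mem_insert]
    constructor
    · rintro ⟨hx, hxa⟩
      rcases eq_or_ne x A with h | h
      · exact Or.inl h
      · exact Or.inr ⟨hx, hxa.ssubset_of_ne h⟩
    · rintro (rfl | ⟨hx, hxa⟩)
      · exact ⟨hA, le_rfl⟩
      · exact ⟨hx, hxa.subset⟩
  rw [h, Finset.sum_insert (by simp only [Finset.mem_filter, not_and]; exact fun _ => lt_irrefl A), myw_spec]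
  ring

lemma sup_mem {m : ℕ} {R : Finset (Finset (Fin m))}
    (hunion : ∀ A ∈ R, ∀ B ∈ R, A ∪ B ∈ R) {ι : Type*}
    (K : Finset ι) (hK : K.Nonempty) (f : ι → Finset (Fin m)) (hf : ∀ i ∈ K, f i ∈ R) :
    K.sup f ∈ R := by
  induction hK using Finset.Nonempty.cons_induction with
  | singleton a => simpa using hf a (by simp)
  | cons a s h hs ih =>
    rw [Finset.sup_cons]
    have := hunion (f a) (hf a (by simp)) (s.sup f) (ih (fun i hi => hf i (by simp [hi])))
    simpa [Finset.sup_eq_union] using this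

lemma inf_mem {m : ℕ} {R : Finset (Finset (Fin m))}
    (hinter : ∀ A ∈ R, ∀ B ∈ R, A ∩ B ∈ R) {ι : Type*}
    (K : Finset ι) (hK : K.Nonempty) (f : ι → Finset (Fin m)) (hf : ∀ i ∈ K, f i ∈ R) :
    K.inf f ∈ R := by
  induction hK using Finset.Nonempty.cons_induction with
  | singleton a => simpa using hf a (by simp)
  | cons a s h hs ih =>
    rw [Finset.inf_cons]
    have := hinter (f a) (hf a (by simp)) (s.inf f) (ih (fun i hi => hf i (by simp [hi])))
    simpa [Finset.inf_eq_inter] using this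

lemma signsum {ι : Type*} [DecidableEq ι] (T : Finset ι) :
    ∑ K ∈ T.powerset.filter (fun K => K.Nonempty), (-1 : ℝ) ^ (K.card + 1)
      = if T.Nonempty then 1 else 0 := by
  have h0 : ∑ K ∈ T.powerset, (-1 : ℝ) ^ K.card = if T = ∅ then 1 else 0 := by
    have := Finset.sum_powerset_neg_one_pow_card (x := T)
    have := congrArg (fun z : ℤ => (z : ℝ)) this
    push_cast at this
    simpa using this
  have h1 : T.powerset = insert ∅ (T.powerset.filter (fun K => K.Nonempty)) := by
    ext K
    simp only [Finset.mem_powerset, Finset.mem_insert, Finset.mem_filter]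
    constructor
    · intro hK
      rcases K.eq_empty_or_nonempty with h | h
      · exact Or.inl h
      · exact Or.inr ⟨hK, h⟩
    · rintro (rfl | ⟨hK, _⟩)
      · exact Finset.empty_subset T
      · exact hK
  rw [h1, Finset.sum_insert (by simp)] at h0
  have h2 : ∀ K ∈ T.powerset.filter (fun K => K.Nonempty),
      (-1 : ℝ) ^ (K.card + 1) = -(-1 : ℝ) ^ K.card := by
    intro K _; ring
  rw [Finset.sum_congr rfl h2, Finset.sum_neg_distrib]
  simp only [Finset.card_empty, pow_zero] at h0
  rcases T.eq_empty_or_nonempty with rfl | hT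
  · simp [Finset.powerset_empty, Finset.filter_singleton]
  · simp only [if_neg (Finset.nonempty_iff_ne_empty.mp hT), hT, if_true] at h0 ⊢
    linarith

theorem weights_of_inclusion_exclusion {m : ℕ} (R : Finset (Finset (Fin m)))
    (hunion : ∀ A ∈ R, ∀ B ∈ R, A ∪ B ∈ R)
    (hinter : ∀ A ∈ R, ∀ B ∈ R, A ∩ B ∈ R)
    (hempty : ∅ ∈ R)
    (φ : Finset (Fin m) → ℝ) (hφ0 : ∀ A ∈ R, 0 ≤ φ A)
    (hmono : ∀ A ∈ R, ∀ B ∈ R, A ⊆ B → φ A ≤ φ B)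
    (hie : ∀ k : ℕ, 0 < k → ∀ A : Fin k → Finset (Fin m), (∀ i, A i ∈ R) →
      ∑ K ∈ (Finset.univ : Finset (Fin k)).powerset.filter (fun K => K.Nonempty),
          (-1 : ℝ) ^ (K.card + 1) * φ (K.inf A)
        ≤ φ (Finset.univ.sup A)) :
    ∃ w : Finset (Fin m) → ℝ, (∀ A ∈ R, 0 ≤ w A) ∧
      ∀ A ∈ R, φ A = ∑ A' ∈ R.filter (fun A' => A' ⊆ A), w A' := by
  refine ⟨myw R φ, ?_, fun A hA => myw_rep R φ A hA⟩
  intro A hA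
  rw [myw_spec]
  set S := R.filter (fun A' => A' ⊂ A) with hS
  rcases S.eq_empty_or_nonempty with hSe | hSne
  · rw [hSe]
    simpa using hφ0 A hA
  · have hk : 0 < S.card := Finset.card_pos.mpr hSne
    set k := S.card with hkdef
    set B : Fin k → Finset (Fin m) := fun i => (S.equivFin.symm i).1 with hBdef
    have hBS : ∀ i, B i ∈ S := fun i => (S.equivFin.symm i).2
    have hBR : ∀ i, B i ∈ R := fun i => (Finset.mem_filter.mp (hBS i)).1
    have hBA : ∀ i, B i ⊂ A := fun i => (Finset.mem_filter.mp (hBS i)).2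
    have hne : Nonempty (Fin k) := ⟨⟨0, hk⟩⟩
    have huniv : (Finset.univ : Finset (Fin k)).Nonempty := Finset.univ_nonempty
    have hsupR : Finset.univ.sup B ∈ R := sup_mem hunion _ huniv B (fun i _ => hBR i)
    have hsupA : Finset.univ.sup B ⊆ A := Finset.sup_le (fun i _ => (hBA i).subset)
    have hsup : φ (Finset.univ.sup B) ≤ φ A := hmono _ hsupR _ hA hsupA
    have hieB := hie k hk B hBR
    have key : ∑ K ∈ (Finset.univ : Finset (Fin k)).powerset.filter (fun K => K.Nonempty),
        (-1 : ℝ) ^ (K.card + 1) * φ (K.inf B) = ∑ A' ∈ S, myw R φ A' := by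
      have step1 : ∀ K ∈ (Finset.univ : Finset (Fin k)).powerset.filter (fun K => K.Nonempty),
          (-1 : ℝ) ^ (K.card + 1) * φ (K.inf B)
          = ∑ A' ∈ R, if A' ⊆ K.inf B then (-1 : ℝ) ^ (K.card + 1) * myw R φ A' else 0 := by
        intro K hK
        obtain ⟨hKu, hKne⟩ := Finset.mem_filter.mp hK
        rw [myw_rep R φ (K.inf B) (inf_mem hinter K hKne B (fun i _ => hBR i)),
          Finset.sum_filter, Finset.mul_sum]
        exact Finset.sum_congr rfl (fun A' _ => by split <;> ring)
      rw [Finset.sum_congr rfl step1, Finset.sum_comm]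
      have step2 : ∀ A' ∈ R,
          (∑ K ∈ (Finset.univ : Finset (Fin k)).powerset.filter (fun K => K.Nonempty),
            if A' ⊆ K.inf B then (-1 : ℝ) ^ (K.card + 1) * myw R φ A' else 0)
          = if A' ∈ S then myw R φ A' else 0 := by
        intro A' hA'
        set T : Finset (Fin k) := Finset.univ.filter (fun i => A' ⊆ B i) with hT
        have hcond : ∀ K : Finset (Fin k), (A' ⊆ K.inf B) ↔ K ⊆ T := by
          intro K
          constructor
          · intro h i hi
            exact Finset.mem_filter.mpr ⟨Finset.mem_univ i, (Finset.le_inf_iff.mp h i hi : A' ⊆ B i)⟩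
          · intro h
            exact Finset.le_inf_iff.mpr (fun i hi => (Finset.mem_filter.mp (h hi)).2)
        have e1 : (∑ K ∈ (Finset.univ : Finset (Fin k)).powerset.filter (fun K => K.Nonempty),
            if A' ⊆ K.inf B then (-1 : ℝ) ^ (K.card + 1) * myw R φ A' else 0)
            = ∑ K ∈ T.powerset.filter (fun K => K.Nonempty),
                (-1 : ℝ) ^ (K.card + 1) * myw R φ A' := by
          rw [Finset.sum_congr rfl (fun K _ => by rw [if_congr (hcond K) rfl rfl]),
            ← Finset.sum_filter]
          congr 1
          ext K
          simp only [Finset.mem_filter, Finset.mem_powerset, Finset.subset_univ, true_and]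
          tauto
        rw [e1, ← Finset.sum_mul, signsum]
        have hTS : T.Nonempty ↔ A' ∈ S := by
          constructor
          · rintro ⟨i, hi⟩
            have hsub : A' ⊆ B i := (Finset.mem_filter.mp hi).2
            exact Finset.mem_filter.mpr ⟨hA', lt_of_le_of_lt hsub (hBA i)⟩
          · intro hA'S
            refine ⟨S.equivFin ⟨A', hA'S⟩, Finset.mem_filter.mpr ⟨Finset.mem_univ _, ?_⟩⟩
            show A' ⊆ B (S.equivFin ⟨A', hA'S⟩)
            simp [hBdef]
        by_cases hc : A' ∈ S
        · rw [if_pos (hTS.mpr hc), if_pos hc, one_mul]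
        · rw [if_neg (fun h => hc (hTS.mp h)), if_neg hc, zero_mul]
      rw [Finset.sum_congr rfl step2, ← Finset.sum_filter]
      congr 1
      ext x
      simp only [Finset.mem_filter, hS]
      tauto
    rw [key] at hieB
    linarith
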